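/- Let L ⊆ 2* be recognized by an NFA with state set Q and suppose shiftlag(L) < m. Then L ⊆ L_{≤ν} · (1* + 2*)^m, where ν = 2(m(|Q|+1)+1) and L_{≤ν} = {u ∈ 2* : lag(u) ≤ ν}. That is, every word of L factors as a prefix in which every position is at most ν-lagged, followed by at most m constant blocks. -/

import Mathlib

def imb (u : List Bool) : ℤ := (u.count true : ℤ) - (u.count false : ℤ)

def lag (u : List Bool) : ℕ :=
  (Finset.range (u.length + 1)).sup (fun i => (imb (u.take i)).natAbs)

/-- Position `i` (0-indexed) is a shift of `u` if `u[i] ≠ u[i+1]`. -/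
def IsShift (u : List Bool) (i : ℕ) : Prop :=
  i + 1 < u.length ∧ u[i]? ≠ u[i + 1]?

/-- The lag of position `i` of `u`: absolute imbalance of the prefix up to `i`. -/
def lagAt (u : List Bool) (i : ℕ) : ℕ := (imb (u.take (i + 1))).natAbs

/-- `u` contains `n` consecutive shifts (no other shift strictly between two
successive ones), each of which is `≥n`-lagged. -/
def HasShiftLag (u : List Bool) (n : ℕ) : Prop :=
  ∃ l : List ℕ, l.length = n ∧
    l.Chain' (fun i j => i < j ∧ ∀ k, i < k → k < j → ¬ IsShift u k) ∧
    (∀ i ∈ l, IsShift u i) ∧ (∀ i ∈ l, n ≤ lagAt u i)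

namespace SL

def sg (b : Bool) : ℤ := if b then 1 else -1

def wb (l : List (Bool × ℕ)) : List Bool := (l.map fun p => List.replicate p.2 p.1).flatten

def pimb (l : List (Bool × ℕ)) : ℤ := (l.map fun p => sg p.1 * (p.2 : ℤ)).sum

@[simp] lemma wb_nil : wb [] = [] := rfl
@[simp] lemma wb_cons (p : Bool × ℕ) (l : List (Bool × ℕ)) :
    wb (p :: l) = List.replicate p.2 p.1 ++ wb l := by simp [wb]

@[simp] lemma pimb_nil : pimb [] = 0 := rfl
@[simp] lemma pimb_cons (p : Bool × ℕ) (l : List (Bool × ℕ)) :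
    pimb (p :: l) = sg p.1 * p.2 + pimb l := by simp [pimb]

lemma imb_append (a b : List Bool) : imb (a ++ b) = imb a + imb b := by
  simp [imb]; ring

lemma imb_replicate (n : ℕ) (b : Bool) : imb (List.replicate n b) = sg b * n := by
  cases b <;> simp [imb, sg, List.count_replicate]

lemma imb_singleton (b : Bool) : imb [b] = sg b := by
  cases b <;> simp [imb, sg]

lemma step_imb (u : List Bool) (k : ℕ) (b : Bool) (hb : u[k]? = some b) :
    imb (u.take (k + 1)) = imb (u.take k) + sg b := by
  rw [List.take_succ, hb]
  simp [imb_append, imb_singleton]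

lemma sg_cases (b : Bool) : sg b = 1 ∨ sg b = -1 := by cases b <;> simp [sg]

variable {Q : Type*}

inductive NRun (M : NFA Bool Q) : Q → List Bool → Q → Prop where
  | nil (q : Q) : NRun M q [] q
  | cons {p q r : Q} {a : Bool} {w : List Bool} :
      q ∈ M.step p a → NRun M q w r → NRun M p (a :: w) r

lemma nrun_append {M : NFA Bool Q} {p r : Q} {x y : List Bool} :
    NRun M p (x ++ y) r ↔ ∃ q, NRun M p x q ∧ NRun M q y r := by
  induction x generalizing p with
  | nil =>
    simp only [List.nil_append]
    exact ⟨fun h => ⟨p, NRun.nil p, h⟩, fun ⟨q, hq, h⟩ => by cases hq; exact h⟩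
  | cons a x ih =>
    constructor
    · rintro h
      cases h with
      | cons hstep htail =>
        obtain ⟨q, h1, h2⟩ := ih.1 htail
        exact ⟨q, NRun.cons hstep h1, h2⟩
    · rintro ⟨q, hq, h⟩
      cases hq with
      | cons hstep htail =>
        exact NRun.cons hstep (ih.2 ⟨q, htail, h⟩)

lemma mem_evalFrom_iff (M : NFA Bool Q) (w : List Bool) (S : Set Q) (q : Q) :
    q ∈ M.evalFrom S w ↔ ∃ p ∈ S, NRun M p w q := by
  induction w generalizing S with
  | nil =>
    simp only [NFA.evalFrom_nil]
    exact ⟨fun h => ⟨q, h, NRun.nil q⟩, fun ⟨p, hp, hr⟩ => by cases hr; exact hp⟩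
  | cons a w ih =>
    have : M.evalFrom S (a :: w) = M.evalFrom (M.stepSet S a) w := rfl
    rw [this, ih]
    constructor
    · rintro ⟨r, hr, hrun⟩
      rw [NFA.mem_stepSet] at hr
      obtain ⟨p, hp, hstep⟩ := hr
      exact ⟨p, hp, NRun.cons hstep hrun⟩
    · rintro ⟨p, hp, hrun⟩
      cases hrun with
      | cons hstep htail =>
        exact ⟨_, NFA.mem_stepSet.2 ⟨p, hp, hstep⟩, htail⟩

lemma mem_accepts_iff (M : NFA Bool Q) (w : List Bool) :
    w ∈ M.accepts ↔ ∃ p ∈ M.start, ∃ q ∈ M.accept, NRun M p w q := by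
  rw [NFA.mem_accepts]
  constructor
  · rintro ⟨S, hS, hev⟩
    obtain ⟨p, hp, hr⟩ := (mem_evalFrom_iff M w M.start S).1 hev
    exact ⟨p, hp, S, hS, hr⟩
  · rintro ⟨p, hp, q, hq, hr⟩
    exact ⟨q, hq, (mem_evalFrom_iff M w M.start q).2 ⟨p, hp, hr⟩⟩

lemma nrun_replicate_of_fn {M : NFA Bool Q} {b : Bool} :
    ∀ (n : ℕ) (f : ℕ → Q), (∀ i < n, f (i + 1) ∈ M.step (f i) b) →
      NRun M (f 0) (List.replicate n b) (f n) := by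
  intro n
  induction n with
  | zero => intro f _; exact NRun.nil _
  | succ n ih =>
    intro f hf
    rw [List.replicate_succ]
    exact NRun.cons (hf 0 (Nat.succ_pos n)) (ih (fun i => f (i + 1)) (fun i hi => hf (i + 1) (by omega)))

lemma fn_of_nrun_replicate {M : NFA Bool Q} {b : Bool} :
    ∀ (n : ℕ) (p q : Q), NRun M p (List.replicate n b) q →
      ∃ f : ℕ → Q, f 0 = p ∧ f n = q ∧ ∀ i < n, f (i + 1) ∈ M.step (f i) b := by
  intro n
  induction n with
  | zero =>
    intro p q h
    cases h
    exact ⟨fun _ => p, rfl, rfl, by omega⟩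
  | succ n ih =>
    intro p q h
    rw [List.replicate_succ] at h
    cases h with
    | cons hstep htail =>
      rename_i r
      obtain ⟨f, hf0, hfn, hf⟩ := ih r q htail
      refine ⟨fun i => if i = 0 then p else f (i - 1), by simp, by simp [hfn], ?_⟩
      intro i hi
      cases i with
      | zero => simpa [hf0] using hstep
      | succ i => simpa using hf i (by omega)

lemma nrun_splice {M : NFA Bool Q} {b : Bool} {n : ℕ} (f : ℕ → Q)
    (hf : ∀ t < n, f (t + 1) ∈ M.step (f t) b) (i j : ℕ) (hij : i < j) (hjn : j ≤ n)
    (heq : f i = f j) :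
    NRun M (f 0) (List.replicate (n - (j - i)) b) (f n) := by
  set g : ℕ → Q := fun t => if t ≤ i then f t else f (t + (j - i)) with hg
  have hgi : ∀ t, i ≤ t → g t = f (t + (j - i)) := by
    intro t ht
    by_cases h : t ≤ i
    · have hti : t = i := le_antisymm h ht
      subst hti
      simp only [hg, if_pos le_rfl]
      rw [heq]
      congr 1
      omega
    · simp [hg, h]
  have hstep : ∀ t < n - (j - i), g (t + 1) ∈ M.step (g t) b := by
    intro t ht
    by_cases h1 : t + 1 ≤ i
    · have h2 : t ≤ i := by omega
      simp only [hg, if_pos h1, if_pos h2]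
      exact hf t (by omega)
    · rw [hgi t (by omega), hgi (t + 1) (by omega)]
      have e : t + 1 + (j - i) = t + (j - i) + 1 := by omega
      rw [e]
      exact hf (t + (j - i)) (by omega)
  have h0 : g 0 = f 0 := by simp [hg]
  have hend : g (n - (j - i)) = f n := by
    rw [hgi _ (by omega)]
    congr 1
    omega
  have := nrun_replicate_of_fn (n - (j - i)) g hstep
  rwa [h0, hend] at this

lemma nrun_shrink {M : NFA Bool Q} [Fintype Q] {b : Bool} {p q : Q} :
    ∀ (n : ℕ), NRun M p (List.replicate n b) q →
      ∃ n', n' ≤ Fintype.card Q ∧ (1 ≤ n → 1 ≤ n') ∧ NRun M p (List.replicate n' b) q := by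
  intro n
  induction n using Nat.strong_induction_on with
  | _ n IH =>
    intro h
    set c := Fintype.card Q with hc
    by_cases hn : n ≤ c
    · exact ⟨n, hn, fun h1 => h1, h⟩
    · push_neg at hn
      obtain ⟨f, hf0, hfn, hf⟩ := fn_of_nrun_replicate n p q h
      have hcard : Fintype.card Q < Fintype.card (Fin (c + 1)) := by simp; omega
      obtain ⟨i, j, hij, hfij⟩ := Fintype.exists_ne_map_eq_of_card_lt
        (fun t : Fin (c + 1) => f (t.val + 1)) hcard
      have key : ∃ i' j' : ℕ, i' < j' ∧ j' ≤ c ∧ f (i' + 1) = f (j' + 1) := by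
        rcases Nat.lt_or_ge i.val j.val with h' | h'
        · exact ⟨i.val, j.val, h', by omega, hfij⟩
        · have h'' : j.val < i.val := by
            rcases Nat.lt_or_ge j.val i.val with h2 | h2
            · exact h2
            · exact absurd (Fin.ext (by omega)) hij
          exact ⟨j.val, i.val, h'', by omega, hfij.symm⟩
      obtain ⟨i', j', hij', hj'c, heq⟩ := key
      have hrun2 := nrun_splice f hf (i' + 1) (j' + 1) (by omega) (by omega) heq
      rw [hf0, hfn] at hrun2
      obtain ⟨n', h1, h2, h3⟩ := IH (n - (j' + 1 - (i' + 1))) (by omega) hrun2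
      exact ⟨n', h1, fun _ => h2 (by omega), h3⟩

noncomputable def shiftsGe (u : List Bool) (P : ℕ) : Finset ℕ :=
  @Finset.filter _ (fun k => IsShift u k ∧ P ≤ k) (Classical.decPred _) (Finset.range u.length)

lemma mem_shiftsGe {u : List Bool} {P k : ℕ} :
    k ∈ shiftsGe u P ↔ IsShift u k ∧ P ≤ k := by
  simp only [shiftsGe, Finset.mem_filter, Finset.mem_range]
  constructor
  · rintro ⟨_, h⟩; exact h
  · rintro ⟨h1, h2⟩; exact ⟨by have := h1.1; omega, h1, h2⟩

lemma isShift_drop (u : List Bool) (d i : ℕ) :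
    IsShift (u.drop d) i ↔ IsShift u (d + i) := by
  have e : d + (i + 1) = d + i + 1 := by omega
  simp only [IsShift, List.getElem?_drop, List.length_drop, e]
  constructor
  · rintro ⟨h1, h2⟩; exact ⟨by omega, h2⟩
  · rintro ⟨h1, h2⟩; exact ⟨by omega, h2⟩

lemma card_shiftsGe_drop (u : List Bool) (P : ℕ) :
    (shiftsGe (u.drop P) 0).card ≤ (shiftsGe u P).card := by
  apply Finset.card_le_card_of_injOn (fun i => P + i)
  · intro i hi
    simp only [Finset.mem_coe] at hi ⊢; rw [mem_shiftsGe] at hi ⊢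
    exact ⟨(isShift_drop u P i).1 hi.1, by omega⟩
  · intro a _ b _ h
    dsimp only at h
    omega

/-- Walking up within a constant block: lag keeps increasing until a shift. -/
lemma lag_up (u : List Bool) (ν : ℕ) :
    ∀ d P, IsShift u (P + d) → ν < (imb (u.take (P + 1))).natAbs →
      (imb (u.take P)).natAbs < (imb (u.take (P + 1))).natAbs →
      ∃ q, IsShift u q ∧ q ≤ P + d ∧ ν < (imb (u.take (q + 1))).natAbs := by
  intro d
  induction d with
  | zero => intro P hs h1 _; exact ⟨P, hs, le_refl _, h1⟩
  | succ d IH =>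
    intro P hs h1 h2
    by_cases hPs : IsShift u P
    · exact ⟨P, hPs, by omega, h1⟩
    · have hlen : P + 1 < u.length := by
        have := hs.1; omega
      have heq : u[P]? = u[P + 1]? := by
        by_contra hne
        exact hPs ⟨hlen, hne⟩
      have hP : P < u.length := by omega
      obtain ⟨b, hb⟩ : ∃ b, u[P]? = some b := ⟨u[P], List.getElem?_eq_getElem hP⟩
      have hb1 : u[P + 1]? = some b := heq ▸ hb
      have e1 := step_imb u P b hb
      have e2 := step_imb u (P + 1) b hb1
      have hs' : IsShift u (P + 1 + d) := by
        have e : P + 1 + d = P + (d + 1) := by omega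
        rwa [e]
      obtain ⟨q, hq1, hq2, hq3⟩ := IH (P + 1) hs'
        (by rcases sg_cases b with h | h <;> rw [h] at e1 e2 <;> omega)
        (by rcases sg_cases b with h | h <;> rw [h] at e1 e2 <;> omega)
      exact ⟨q, hq1, by omega, hq3⟩

lemma lag_down (u : List Bool) (ν J : ℕ) (hJ : IsShift u J) :
    ∀ P, P ≤ J → ν < (imb (u.take (P + 1))).natAbs →
      ∃ q, IsShift u q ∧ q ≤ J ∧ ν < (imb (u.take (q + 1))).natAbs := by
  intro P
  induction P with
  | zero =>
    intro _ h1
    have h0 : (imb (u.take 0)).natAbs < (imb (u.take (0 + 1))).natAbs := by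
      have e : imb (u.take 0) = 0 := by simp [imb]
      rw [e]
      omega
    obtain ⟨q, a, b, c⟩ := lag_up u ν J 0 (by simpa using hJ) h1 h0
    exact ⟨q, a, by omega, c⟩
  | succ P IH =>
    intro hPJ h1
    by_cases hlt : (imb (u.take (P + 1))).natAbs < (imb (u.take (P + 2))).natAbs
    · have e : P + 1 + (J - (P + 1)) = J := by omega
      obtain ⟨q, hq1, hq2, hq3⟩ := lag_up u ν (J - (P + 1)) (P + 1) (by rwa [e]) h1 hlt
      exact ⟨q, hq1, by omega, hq3⟩
    · have h1' : ν < (imb (u.take (P + 2))).natAbs := h1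
      exact IH (by omega) (by omega)

lemma shiftCount_lt (n : ℕ) (hn : 1 ≤ n) (a b₂ : Bool) (r₂ : List Bool) (hne : b₂ ≠ a) :
    (shiftsGe (b₂ :: r₂) 0).card < (shiftsGe (List.replicate n a ++ b₂ :: r₂) 0).card := by
  set r : List Bool := b₂ :: r₂ with hr
  set v : List Bool := List.replicate n a ++ r with hv
  have hlenv : v.length = n + r.length := by simp [hv]
  have hkey : (n - 1) ∈ shiftsGe v 0 := by
    rw [mem_shiftsGe]
    refine ⟨⟨?_, ?_⟩, by omega⟩
    · have : r.length ≥ 1 := by simp [hr]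
      omega
    · have e1 : v[n - 1]? = some a := by
        rw [hv, List.getElem?_append_left (by simp; omega)]
        exact List.getElem?_replicate_of_lt (by omega)
      have e2 : v[n - 1 + 1]? = some b₂ := by
        have e : n - 1 + 1 = n := by omega
        rw [e, hv, List.getElem?_append_right (by simp)]
        simp [hr]
      rw [e1, e2]
      simp only [ne_eq, Option.some.injEq]
      exact fun h => hne h.symm
  have hsub : (shiftsGe r 0).card ≤ ((shiftsGe v 0).erase (n - 1)).card := by
    apply Finset.card_le_card_of_injOn (fun i => i + n)
    · intro i hi
      simp only [Finset.mem_coe] at hi ⊢; rw [mem_shiftsGe] at hi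
      obtain ⟨⟨hi1, hi2⟩, _⟩ := hi
      rw [Finset.mem_erase, mem_shiftsGe]
      refine ⟨by omega, ⟨⟨by omega, ?_⟩, by omega⟩⟩
      have e1 : v[i + n]? = r[i]? := by
        rw [hv, List.getElem?_append_right (by simp only [List.length_replicate]; omega)]
        simp
      have e2 : v[i + n + 1]? = r[i + 1]? := by
        rw [hv, List.getElem?_append_right (by simp only [List.length_replicate]; omega)]
        have e : i + n + 1 - (List.replicate n a).length = i + 1 := by simp only [List.length_replicate]; omega
        rw [e]
      rw [e1, e2]
      exact hi2
    · intro x _ y _ h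
      dsimp only at h
      omega
  have hpos : 0 < (shiftsGe v 0).card := Finset.card_pos.2 ⟨_, hkey⟩
  have := Finset.card_erase_of_mem hkey
  omega

lemma dropWhile_head_false {p : Bool → Bool} :
    ∀ (l : List Bool) (b : Bool) (t : List Bool), l.dropWhile p = b :: t → p b = false := by
  intro l
  induction l with
  | nil => intro b t h; simp at h
  | cons x xs ih =>
    intro b t h
    rw [List.dropWhile_cons] at h
    by_cases hx : p x = true
    · rw [if_pos hx] at h
      exact ih b t h
    · rw [if_neg hx] at h
      cases h
      simpa using hx

lemma blocks_of_few_shifts :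
    ∀ (mm : ℕ) (v : List Bool), (shiftsGe v 0).card < mm →
      ∃ blocks : List (List Bool), blocks.length = mm ∧ v = blocks.flatten ∧
        ∀ b ∈ blocks, (∀ x ∈ b, x = true) ∨ (∀ x ∈ b, x = false) := by
  intro mm
  induction mm with
  | zero => intro v h; omega
  | succ mm IH =>
    intro v hv
    cases v with
    | nil =>
      refine ⟨List.replicate (mm + 1) [], by simp, ?_, ?_⟩
      · have : ∀ k, (List.replicate k ([] : List Bool)).flatten = [] := by
          intro k; induction k with
          | zero => simp
          | succ k ih => simp [List.replicate_succ, ih]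
        rw [this]
      · intro b hb
        rw [List.eq_of_mem_replicate hb]
        simp
    | cons a v' =>
      set t := (a :: v').takeWhile (· == a) with ht
      set r := (a :: v').dropWhile (· == a) with hrdef
      have htr : t ++ r = a :: v' := by
        rw [ht, hrdef]; exact List.takeWhile_append_dropWhile
      have htconst : ∀ x ∈ t, x = a := by
        intro x hx
        have := List.mem_takeWhile_imp hx
        simpa using this
      have htrep : t = List.replicate t.length a :=
        List.eq_replicate_of_mem htconst
      have htlen : 1 ≤ t.length := by
        rw [ht]
        simp [List.takeWhile_cons]
      cases hr : r with
      | nil =>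
        refine ⟨(a :: v') :: List.replicate mm [], by simp, by simp, ?_⟩
        intro b hb
        rcases List.mem_cons.1 hb with hb | hb
        · subst hb
          have : a :: v' = t := by rw [← htr, hr, List.append_nil]
          rw [this]
          cases a
          · right; intro x hx; exact htconst x hx
          · left; intro x hx; exact htconst x hx
        · rw [List.eq_of_mem_replicate hb]; simp
      | cons b₂ r₂ =>
        have hb₂ : b₂ ≠ a := by
          have := dropWhile_head_false (a :: v') b₂ r₂ (by rw [← hrdef, hr])
          simpa using this
        have hcount : (shiftsGe r 0).card < (shiftsGe (a :: v') 0).card := by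
          rw [hr, ← htr, htrep, hr]
          exact shiftCount_lt t.length htlen a b₂ r₂ hb₂
        obtain ⟨blocks', hb1, hb2, hb3⟩ := IH r (by rw [hr] at hcount ⊢; omega)
        refine ⟨t :: blocks', by simp [hb1], by rw [List.flatten_cons, ← hb2, htr], ?_⟩
        intro b hb
        rcases List.mem_cons.1 hb with hb | hb
        · subst hb
          cases a
          · right; intro x hx; exact htconst x hx
          · left; intro x hx; exact htconst x hx
        · exact hb3 b hb

lemma drop_eq_replicate_append (u : List Bool) (b : Bool) :
    ∀ (d a : ℕ), (∀ j, a ≤ j → j < a + d → u[j]? = some b) →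
      u.drop a = List.replicate d b ++ u.drop (a + d) := by
  intro d
  induction d with
  | zero => intro a _; simp
  | succ d IH =>
    intro a h
    have ha : u[a]? = some b := h a le_rfl (by omega)
    have halen : a < u.length := by
      by_contra hc
      rw [List.getElem?_eq_none (by omega)] at ha
      exact absurd ha (by simp)
    have hga : u[a] = b := by
      have := List.getElem?_eq_getElem halen
      rw [this] at ha
      exact Option.some.inj ha
    rw [List.drop_eq_getElem_cons halen, hga]
    rw [List.replicate_succ, List.cons_append]
    congr 1
    have e : a + (d + 1) = (a + 1) + d := by omega
    rw [e]
    exact IH (a + 1) (fun j h1 h2 => h j (by omega) (by omega))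

lemma decompose (u : List Bool) :
    ∀ n, 1 ≤ n → ∀ q b₀, u[q]? = some b₀ → IsShift u q →
      n - 1 ≤ (shiftsGe u (q + 1)).card →
      ∃ (mid : List (Bool × ℕ)) (z : List Bool),
        u.drop q = wb mid ++ z ∧ mid.length = n + 1 ∧ (∀ p ∈ mid, 1 ≤ p.2) ∧
        List.Chain' (fun p q => p.1 ≠ q.1) mid ∧ mid.head? = some (b₀, 1) := by
  intro n hn
  induction n, hn using Nat.le_induction with
  | base =>
    intro q b₀ hb₀ hq _
    obtain ⟨hlen, hne⟩ := hq
    have hq1 : q + 1 < u.length := hlen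
    obtain ⟨b₁, hb₁⟩ : ∃ b₁, u[q + 1]? = some b₁ :=
      ⟨u[q + 1], List.getElem?_eq_getElem hq1⟩
    have hbne : b₀ ≠ b₁ := by
      intro h
      exact hne (by rw [hb₀, hb₁, h])
    refine ⟨[(b₀, 1), (b₁, 1)], u.drop (q + 2), ?_, by simp, by simp, ?_, by simp⟩
    · have h1 : q < u.length := by omega
      have e0 : u[q] = b₀ := by
        have := List.getElem?_eq_getElem h1
        rw [this] at hb₀; exact Option.some.inj hb₀
      have e1 : u[q + 1] = b₁ := by
        have := List.getElem?_eq_getElem hq1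
        rw [this] at hb₁; exact Option.some.inj hb₁
      rw [List.drop_eq_getElem_cons h1, List.drop_eq_getElem_cons hq1, e0, e1]
      simp
    · exact List.isChain_cons_cons.2 ⟨hbne, List.isChain_singleton _⟩
  | succ n hn IH =>
    intro q b₀ hb₀ hq hcard
    -- find the next shift q'
    have hpos : 0 < (shiftsGe u (q + 1)).card := by omega
    obtain ⟨k₀, hk₀⟩ := Finset.card_pos.1 hpos
    rw [mem_shiftsGe] at hk₀
    have hex : ∃ k, IsShift u k ∧ q + 1 ≤ k := ⟨k₀, hk₀⟩
    haveI := Classical.decPred (fun k => IsShift u k ∧ q + 1 ≤ k)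
    set q' := Nat.find hex with hq'def
    obtain ⟨hq'shift, hq'gt⟩ := Nat.find_spec hex
    have hq'min : ∀ k, IsShift u k → q + 1 ≤ k → q' ≤ k := fun k h1 h2 => Nat.find_min' hex ⟨h1, h2⟩
    have hq'len : q' + 1 < u.length := hq'shift.1
    obtain ⟨b', hb'⟩ : ∃ b', u[q']? = some b' := ⟨u[q'], List.getElem?_eq_getElem (by omega)⟩
    -- constancy between q and q'
    have claim1 : ∀ d j, j + d = q' → q + 1 ≤ j → u[j]? = some b' := by
      intro d
      induction d with
      | zero => intro j h1 _; rw [show j = q' by omega]; exact hb'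
      | succ d IHd =>
        intro j h1 h2
        have hjlt : j < q' := by omega
        have hnotshift : ¬ IsShift u j := by
          intro hs
          exact absurd (hq'min j hs h2) (by omega)
        have hjlen : j + 1 < u.length := by omega
        have heq : u[j]? = u[j + 1]? := by
          by_contra hc
          exact hnotshift ⟨hjlen, hc⟩
        rw [heq]
        exact IHd (j + 1) (by omega) (by omega)
    -- card for recursion
    have hcard' : n - 1 ≤ (shiftsGe u (q' + 1)).card := by
      have hsub : shiftsGe u (q + 1) ⊆ insert q' (shiftsGe u (q' + 1)) := by
        intro k hk
        rw [mem_shiftsGe] at hk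
        obtain ⟨hk1, hk2⟩ := hk
        have := hq'min k hk1 hk2
        rcases eq_or_lt_of_le this with h | h
        · exact Finset.mem_insert.2 (Or.inl h.symm)
        · exact Finset.mem_insert.2 (Or.inr (mem_shiftsGe.2 ⟨hk1, by omega⟩))
      have h1 := Finset.card_le_card hsub
      have h2 := Finset.card_insert_le q' (shiftsGe u (q' + 1))
      omega
    obtain ⟨mid', z', hdrop', hlen', hpos', hchain', hhead'⟩ := IH q' b' hb' hq'shift hcard'
    obtain ⟨p₁, tl, rfl⟩ : ∃ p₁ tl, mid' = p₁ :: tl := by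
      cases mid' with
      | nil => simp at hhead'
      | cons p₁ tl => exact ⟨p₁, tl, rfl⟩
    have hp₁ : p₁ = (b', 1) := by simpa using hhead'
    subst hp₁
    refine ⟨(b₀, 1) :: (b', q' - q) :: tl, z', ?_, ?_, ?_, ?_, by simp⟩
    · -- the decomposition equation
      have hql : q < u.length := by omega
      have e0 : u[q] = b₀ := by
        have := List.getElem?_eq_getElem hql
        rw [this] at hb₀; exact Option.some.inj hb₀
      have hseg : u.drop (q + 1) = List.replicate (q' - (q + 1)) b' ++ u.drop q' := by
        have := drop_eq_replicate_append u b' (q' - (q + 1)) (q + 1)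
          (fun j h1 h2 => claim1 (q' - j) j (by omega) h1)
        rwa [show q + 1 + (q' - (q + 1)) = q' by omega] at this
      rw [List.drop_eq_getElem_cons hql, e0, hseg, hdrop']
      simp only [wb_cons]
      rw [show q' - q = (q' - (q + 1)) + 1 by omega]
      simp [List.replicate_succ', List.append_assoc]
    · have := hlen'
      simp only [List.length_cons] at this ⊢
      omega
    · intro p hp
      simp only [List.mem_cons] at hp
      rcases hp with h | h | h
      · simp [h]
      · simp [h]; omega
      · exact hpos' p (by simp [List.mem_cons, h])
    · -- chain
      have hb₀b' : b₀ ≠ b' := by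
        have hqlen : q + 1 < u.length := hq.1
        have hub' : u[q + 1]? = some b' := claim1 (q' - (q + 1)) (q + 1) (by omega) le_rfl
        intro h
        exact hq.2 (by rw [hb₀, hub', h])
      unfold List.Chain' at hchain' ⊢; rw [List.isChain_cons_cons]
      constructor
      · simpa using hb₀b'
      · rw [List.isChain_cons] at hchain' ⊢
        exact ⟨fun p hp => by simpa using hchain'.1 p hp, hchain'.2⟩
  
/-- relation between original and shrunk blocks -/
def rel (bad : Bool) (c : ℕ) (p p' : Bool × ℕ) : Prop :=
  p'.1 = p.1 ∧ 1 ≤ p'.2 ∧ (p.1 = bad → p'.2 ≤ c) ∧ (p.1 ≠ bad → p'.2 = p.2)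

lemma shrink_mid (M : NFA Bool Q) [Fintype Q] (bad : Bool) :
    ∀ (mid : List (Bool × ℕ)) (p q : Q), (∀ pp ∈ mid, 1 ≤ pp.2) →
      NRun M p (wb mid) q →
      ∃ mid', NRun M p (wb mid') q ∧ List.Forall₂ (rel bad (Fintype.card Q)) mid mid' := by
  intro mid
  induction mid with
  | nil =>
    intro p q _ h
    exact ⟨[], by simpa using h, List.Forall₂.nil⟩
  | cons pp rest IHr =>
    intro p q hpos h
    rw [wb_cons] at h
    obtain ⟨r, h1, h2⟩ := nrun_append.1 h
    obtain ⟨rest', hrun', hF'⟩ := IHr r q (fun x hx => hpos x (List.mem_cons_of_mem _ hx)) h2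
    have hpp : 1 ≤ pp.2 := hpos pp List.mem_cons_self
    by_cases hbad : pp.1 = bad
    · obtain ⟨n', hn'c, hn'1, hrun1⟩ := nrun_shrink pp.2 h1
      refine ⟨(pp.1, n') :: rest', ?_, ?_⟩
      · rw [wb_cons]
        exact nrun_append.2 ⟨r, hrun1, hrun'⟩
      · exact List.Forall₂.cons ⟨rfl, hn'1 hpp, fun _ => hn'c, fun hc => absurd hbad hc⟩ hF'
    · refine ⟨pp :: rest', ?_, ?_⟩
      · rw [wb_cons]
        exact nrun_append.2 ⟨r, h1, hrun'⟩
      · exact List.Forall₂.cons ⟨rfl, hpp, fun hc => absurd hc hbad, fun _ => rfl⟩ hF'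

lemma rel_facts (bad : Bool) (c : ℕ) :
    ∀ mid mid', List.Forall₂ (rel bad c) mid mid' →
      mid'.map Prod.fst = mid.map Prod.fst ∧
      (∀ p ∈ mid', 1 ≤ p.2 ∧ (p.1 = bad → p.2 ≤ c)) ∧
      mid'.length = mid.length := by
  intro mid mid' h
  induction h with
  | nil => simp
  | cons hrel htail IH =>
    obtain ⟨e1, e2, e3, _⟩ := hrel
    refine ⟨by simp [e1, IH.1], ?_, by simp [IH.2.2]⟩
    intro p hp
    rcases List.mem_cons.1 hp with h | h
    · subst h
      exact ⟨e2, fun hb => e3 (by rw [← e1, hb])⟩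
    · exact IH.2.1 p h

lemma pimb_lower (ε : ℤ) (c : ℕ) :
    ∀ l : List (Bool × ℕ), (∀ p ∈ l, -(c : ℤ) ≤ ε * (sg p.1 * p.2)) →
      -((l.length : ℤ) * c) ≤ ε * pimb l := by
  intro l
  induction l with
  | nil => simp
  | cons p l IH =>
    intro h
    have h1 := h p List.mem_cons_self
    have h2 := IH (fun x hx => h x (List.mem_cons_of_mem _ hx))
    rw [pimb_cons, mul_add]
    simp only [List.length_cons]
    push_cast
    linarith

lemma getElem_mid (x y : List Bool) (b : Bool) (n i : ℕ) (hi : i < n) :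
    (x ++ (List.replicate n b ++ y))[x.length + i]? = some b := by
  rw [List.getElem?_append_right (by omega)]
  have e : x.length + i - x.length = i := by omega
  rw [e, List.getElem?_append_left (by simpa using hi), List.getElem?_replicate_of_lt hi]

def hspec (x : List Bool) (mid : List (Bool × ℕ)) : Option ℕ :=
  match mid with
  | p₁ :: _ :: _ => some (x.length + p₁.2 - 1)
  | _ => none

lemma abs_ge_eps {ε v : ℤ} (hε : ε = 1 ∨ ε = -1) : ε * v ≤ |v| := by
  rcases hε with h | h <;> subst h
  · simpa using le_abs_self v
  · simpa using neg_le_abs v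

lemma boundary_chain (mm : ℕ) (ε : ℤ) (hε : ε = 1 ∨ ε = -1) (z : List Bool) :
    ∀ (mid : List (Bool × ℕ)) (x : List Bool),
      (∀ p ∈ mid, 1 ≤ p.2) →
      List.Chain' (fun p q => p.1 ≠ q.1) mid →
      (∀ t, t < mid.length → (mm : ℤ) ≤ ε * (imb x + pimb (mid.take (t + 1)))) →
      ∃ l : List ℕ,
        l.length = mid.length - 1 ∧
        l.head? = hspec x mid ∧
        List.Chain' (fun i j => i < j ∧ ∀ k, i < k → k < j → ¬ IsShift (x ++ wb mid ++ z) k) l ∧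
        (∀ e ∈ l, IsShift (x ++ wb mid ++ z) e) ∧
        (∀ e ∈ l, (mm : ℤ) ≤ |imb ((x ++ wb mid ++ z).take (e + 1))|) := by
  intro mid
  induction mid with
  | nil =>
    intro x _ _ _
    exact ⟨[], by simp, by simp [hspec], List.isChain_nil, by simp, by simp⟩
  | cons p₁ rest IH =>
    obtain ⟨b₁, n₁⟩ := p₁
    cases rest with
    | nil =>
      intro x _ _ _
      exact ⟨[], by simp, by simp [hspec], List.isChain_nil, by simp, by simp⟩
    | cons p₂ rest₂ =>
      obtain ⟨b₂, n₂⟩ := p₂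
      intro x hpos hchain hlag
      set mid := ((b₁, n₁) :: (b₂, n₂) :: rest₂ : List (Bool × ℕ)) with hmid
      set x' := x ++ List.replicate n₁ b₁ with hx'
      set u : List Bool := x ++ wb mid ++ z with hu
      have hn₁ : 1 ≤ n₁ := hpos (b₁, n₁) (by simp [hmid])
      have hn₂ : 1 ≤ n₂ := hpos (b₂, n₂) (by simp [hmid])
      have hx'len : x'.length = x.length + n₁ := by simp [hx']
      have hw : u = x' ++ wb ((b₂, n₂) :: rest₂) ++ z := by
        simp [hu, hx', hmid, List.append_assoc]
      have hu1 : u = x ++ (List.replicate n₁ b₁ ++ (wb ((b₂, n₂) :: rest₂) ++ z)) := by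
        simp [hu, hmid, List.append_assoc]
      have hu2 : u = x' ++ (List.replicate n₂ b₂ ++ (wb rest₂ ++ z)) := by
        simp [hu, hx', hmid, List.append_assoc]
      have hA : ∀ i < n₁, u[x.length + i]? = some b₁ := by
        intro i hi
        rw [hu1]; exact getElem_mid _ _ _ _ _ hi
      have hB : ∀ i < n₂, u[x'.length + i]? = some b₂ := by
        intro i hi
        rw [hu2]; exact getElem_mid _ _ _ _ _ hi
      have hulen : u.length = x.length + n₁ + n₂ + (wb rest₂).length + z.length := by
        rw [hu2]; simp [hx']; omega
      have hb₁b₂ : b₁ ≠ b₂ := by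
        have := (List.isChain_cons_cons.1 hchain).1
        simpa using this
      set e₁ := x.length + n₁ - 1 with he₁
      have he₁1 : e₁ + 1 = x'.length := by rw [hx'len]; omega
      have hshift₁ : IsShift u e₁ := by
        constructor
        · omega
        · have v1 : u[e₁]? = some b₁ := by
            have := hA (n₁ - 1) (by omega)
            rwa [show x.length + (n₁ - 1) = e₁ by omega] at this
          have v2 : u[e₁ + 1]? = some b₂ := by
            have := hB 0 (by omega)
            rwa [show x'.length + 0 = e₁ + 1 by omega] at this
          rw [v1, v2]
          simp only [ne_eq, Option.some.injEq]
          exact hb₁b₂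
      have htake₁ : imb (u.take (e₁ + 1)) = imb x' := by
        rw [he₁1, hw, List.append_assoc, List.take_left]
      have himbx' : imb x' = imb x + sg b₁ * n₁ := by
        rw [hx', imb_append, imb_replicate]
      have hlag₁ : (mm : ℤ) ≤ |imb (u.take (e₁ + 1))| := by
        refine le_trans ?_ (abs_ge_eps hε)
        rw [htake₁, himbx']
        have := hlag 0 (by simp [hmid])
        simpa [hmid] using this
      -- IH for the tail
      obtain ⟨l', hl'len, hl'head, hl'chain, hl'shift, hl'lag⟩ :=
        IH x' (fun p hp => hpos p (by simp [hmid, hp]))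
          (List.isChain_cons_cons.1 hchain).2
          (by
            intro t ht
            have h2 := hlag (t + 1) (by simp [hmid] at ht ⊢; omega)
            have e : imb x + pimb (mid.take (t + 1 + 1)) = imb x' + pimb (((b₂, n₂) :: rest₂).take (t + 1)) := by
              rw [himbx', hmid, List.take_succ_cons, pimb_cons]
              ring
            rwa [e] at h2)
      rw [← hw] at hl'chain hl'shift hl'lag
      refine ⟨e₁ :: l', ?_, ?_, ?_, ?_, ?_⟩
      · simp only [List.length_cons, hl'len, hmid]
        simp
      · simp [hspec, hmid, he₁]
      · unfold List.Chain' at hl'chain ⊢; rw [List.isChain_cons]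
        refine ⟨?_, hl'chain⟩
        intro e₂ he₂
        rw [hl'head] at he₂
        cases rest₂ with
        | nil => simp [hspec] at he₂
        | cons p₃ rest₃ =>
          simp only [hspec, Option.mem_def, Option.some.injEq] at he₂
          subst he₂
          constructor
          · omega
          · intro k hk1 hk2 hks
            have hkB : u[k]? = some b₂ := by
              have := hB (k - x'.length) (by omega)
              rwa [show x'.length + (k - x'.length) = k by omega] at this
            have hkB' : u[k + 1]? = some b₂ := by
              have := hB (k + 1 - x'.length) (by omega)
              rwa [show x'.length + (k + 1 - x'.length) = k + 1 by omega] at this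
            exact hks.2 (by rw [hkB, hkB'])
      · intro e he
        rcases List.mem_cons.1 he with h | h
        · subst h; exact hshift₁
        · exact hl'shift e h
      · intro e he
        rcases List.mem_cons.1 he with h | h
        · subst h; exact hlag₁
        · exact hl'lag e h

end SL

/-- If `L` is recognized by an NFA with state set `Q` and `shiftlag(L) < m`, then
every word of `L` factors as a prefix of lag at most `ν = 2(m(|Q|+1)+1)` followed
by at most `m` constant blocks, i.e. `L ⊆ L_{≤ν} · (1* + 2*)^m`. -/
theorem shiftlag_form (Q : Type*) [Fintype Q] (M : NFA Bool Q) (m : ℕ)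
    (hsl : ∀ u ∈ M.accepts, ¬ HasShiftLag u m) :
    ∀ u ∈ M.accepts, ∃ (p : List Bool) (blocks : List (List Bool)),
      u = p ++ blocks.flatten ∧
      lag p ≤ 2 * (m * (Fintype.card Q + 1) + 1) ∧
      blocks.length = m ∧
      ∀ b ∈ blocks, (∀ x ∈ b, x = true) ∨ (∀ x ∈ b, x = false) := by
  classical
  intro u hu
  set c := Fintype.card Q with hc
  set ν := 2 * (m * (c + 1) + 1) with hν
  rcases Nat.eq_zero_or_pos m with hm0 | hm
  · exact absurd ⟨[], by simp [hm0], List.isChain_nil, by simp, by simp⟩ (hsl u hu)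
  have hex : ∃ d, (SL.shiftsGe (u.drop d) 0).card < m := by
    refine ⟨u.length, ?_⟩
    rw [List.drop_length]
    have he : SL.shiftsGe ([] : List Bool) 0 = ∅ := by
      apply Finset.eq_empty_of_forall_notMem
      intro k hk
      rw [SL.mem_shiftsGe] at hk
      have := hk.1.1
      simp at this
    rw [he]
    simpa using hm
  set d₀ := Nat.find hex with hd₀def
  have hd₀ : (SL.shiftsGe (u.drop d₀) 0).card < m := Nat.find_spec hex
  have hmin : ∀ d, d < d₀ → m ≤ (SL.shiftsGe (u.drop d) 0).card := by
    intro d hd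
    have := Nat.find_min hex hd
    omega
  have KEY : ∀ P, P < d₀ → (imb (u.take (P + 1))).natAbs ≤ ν := by
    intro P hP
    by_contra hbig
    push_neg at hbig
    have hcard1 : m ≤ (SL.shiftsGe u P).card :=
      le_trans (hmin P hP) (SL.card_shiftsGe_drop u P)
    have hne : ∃ k, IsShift u k ∧ P ≤ k := by
      obtain ⟨k, hk⟩ := Finset.card_pos.1 (by omega : 0 < (SL.shiftsGe u P).card)
      exact ⟨k, SL.mem_shiftsGe.1 hk⟩
    obtain ⟨hqs_shift, hqs_ge⟩ := Nat.find_spec hne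
    obtain ⟨q, hq_shift, hq_le, hq_lag⟩ :=
      SL.lag_down u ν (Nat.find hne) hqs_shift P hqs_ge hbig
    have hcard2 : m - 1 ≤ (SL.shiftsGe u (q + 1)).card := by
      have hsub : SL.shiftsGe u P ⊆ insert q (SL.shiftsGe u (q + 1)) := by
        intro k hk
        rw [SL.mem_shiftsGe] at hk
        have hk2 : Nat.find hne ≤ k := Nat.find_min' hne hk
        rcases eq_or_lt_of_le (le_trans hq_le hk2) with h | h
        · exact Finset.mem_insert.2 (Or.inl h.symm)
        · exact Finset.mem_insert.2 (Or.inr (SL.mem_shiftsGe.2 ⟨hk.1, by omega⟩))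
      have h1 := Finset.card_le_card hsub
      have h2 := Finset.card_insert_le q (SL.shiftsGe u (q + 1))
      omega
    have hqlen : q < u.length := by have := hq_shift.1; omega
    obtain ⟨b₀, hb₀⟩ : ∃ b₀, u[q]? = some b₀ := ⟨u[q], List.getElem?_eq_getElem hqlen⟩
    obtain ⟨mid, z, hdrop, hmidlen, hmidpos, hmidchain, hmidhead⟩ :=
      SL.decompose u m hm q b₀ hb₀ hq_shift hcard2
    have h0 := List.take_append_drop q u
    rw [hdrop] at h0
    set x := u.take q with hx
    have hu_eq : u = x ++ (SL.wb mid ++ z) := h0.symm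
    have ha₁ : imb (u.take (q + 1)) = imb x + SL.sg b₀ := SL.step_imb u q b₀ hb₀
    obtain ⟨ε, hε1, hεa⟩ : ∃ ε : ℤ, (ε = 1 ∨ ε = -1) ∧
        (ν : ℤ) + 1 ≤ ε * imb (u.take (q + 1)) := by
      rcases le_or_gt 0 (imb (u.take (q + 1))) with h | h
      · refine ⟨1, Or.inl rfl, ?_⟩
        rw [one_mul]
        omega
      · refine ⟨-1, Or.inr rfl, ?_⟩
        rw [neg_one_mul]
        omega
    have hεx : (ν : ℤ) ≤ ε * imb x := by
      rw [ha₁, mul_add] at hεa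
      rcases hε1 with h | h <;> subst h <;>
        rcases SL.sg_cases b₀ with h2 | h2 <;> rw [h2] at hεa <;> linarith
    obtain ⟨bad, hbad1, hbad2⟩ : ∃ bad : Bool, ε * SL.sg bad = -1 ∧
        ∀ b : Bool, b ≠ bad → ε * SL.sg b = 1 := by
      rcases hε1 with h | h <;> subst h
      · refine ⟨false, by simp [SL.sg], ?_⟩
        intro b hb
        cases b
        · exact absurd rfl hb
        · simp [SL.sg]
      · refine ⟨true, by simp [SL.sg], ?_⟩
        intro b hb
        cases b
        · simp [SL.sg]
        · exact absurd rfl hb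
    obtain ⟨p₀, hp₀, qf, hqf, hrun⟩ := (SL.mem_accepts_iff M u).1 hu
    rw [hu_eq] at hrun
    obtain ⟨r₁, hrx, hr2⟩ := SL.nrun_append.1 hrun
    obtain ⟨r₂, hrmid, hrz⟩ := SL.nrun_append.1 hr2
    obtain ⟨mid', hrmid', hF⟩ := SL.shrink_mid M bad mid r₁ r₂ hmidpos hrmid
    obtain ⟨hmap, hfacts, hlen'⟩ := SL.rel_facts bad c mid mid' hF
    set u' := x ++ SL.wb mid' ++ z with hu'def
    have hu' : u' ∈ M.accepts := by
      rw [SL.mem_accepts_iff]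
      have h3 : SL.NRun M p₀ (x ++ (SL.wb mid' ++ z)) qf :=
        SL.nrun_append.2 ⟨r₁, hrx, SL.nrun_append.2 ⟨r₂, hrmid', hrz⟩⟩
      rw [← List.append_assoc] at h3
      exact ⟨p₀, hp₀, qf, hqf, h3⟩
    have hmidlen' : mid'.length = m + 1 := by rw [hlen', hmidlen]
    have hpos' : ∀ p ∈ mid', 1 ≤ p.2 := fun p hp => (hfacts p hp).1
    have hchain' : List.Chain' (fun p q => p.1 ≠ q.1) mid' := by
      have h1 : List.Chain' Ne (mid.map Prod.fst) := (List.isChain_map Prod.fst).2 hmidchain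
      rw [← hmap] at h1
      exact (List.isChain_map Prod.fst).1 h1
    have hHlag : ∀ t, t < mid'.length → (m : ℤ) ≤ ε * (imb x + SL.pimb (mid'.take (t + 1))) := by
      intro t ht
      have hsum : -(((mid'.take (t + 1)).length : ℤ) * c) ≤ ε * SL.pimb (mid'.take (t + 1)) := by
        apply SL.pimb_lower
        intro p hp
        have hpm : p ∈ mid' := List.mem_of_mem_take hp
        obtain ⟨hp1, hp2⟩ := hfacts p hpm
        by_cases hb : p.1 = bad
        · rw [← mul_assoc, hb, hbad1]
          have := hp2 hb
          omega
        · rw [← mul_assoc, hbad2 p.1 hb, one_mul]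
          omega
      have hlentake : ((mid'.take (t + 1)).length : ℤ) * c ≤ ((m : ℤ) + 1) * c := by
        have h1 : (mid'.take (t + 1)).length ≤ m + 1 := by
          rw [List.length_take]
          omega
        have hc0 : (0 : ℤ) ≤ c := by positivity
        exact mul_le_mul_of_nonneg_right (by exact_mod_cast h1) hc0
      have h1c : (c : ℤ) ≤ (m : ℤ) * c :=
        le_mul_of_one_le_left (by positivity) (by exact_mod_cast hm)
      have harith : (m : ℤ) ≤ (ν : ℤ) - ((m : ℤ) + 1) * c := by
        rw [hν]
        push_cast
        ring_nf
        linarith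
      have hexp : ε * (imb x + SL.pimb (mid'.take (t + 1))) =
          ε * imb x + ε * SL.pimb (mid'.take (t + 1)) := by ring
      rw [hexp]
      linarith
    obtain ⟨l, hllen, _, hlchain, hlshift, hllag⟩ :=
      SL.boundary_chain m ε hε1 z mid' x hpos' hchain' hHlag
    refine hsl u' hu' ⟨l, ?_, hlchain, hlshift, ?_⟩
    · rw [hllen, hmidlen']
      simp
    · intro i hi
      have h2 := hllag i hi
      rw [Int.abs_eq_natAbs] at h2
      exact_mod_cast h2
  obtain ⟨blocks, hblen, hbflat, hbconst⟩ := SL.blocks_of_few_shifts m (u.drop d₀) hd₀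
  refine ⟨u.take d₀, blocks, ?_, ?_, hblen, hbconst⟩
  · rw [← hbflat, List.take_append_drop]
  · apply Finset.sup_le
    intro i hi
    rw [Finset.mem_range] at hi
    cases i with
    | zero => simp [imb]
    | succ P =>
      have hlen : (u.take d₀).length = min d₀ u.length := List.length_take
      have hPd : P < d₀ := by omega
      have htt : (u.take d₀).take (P + 1) = u.take (P + 1) := by
        rw [List.take_take]
        congr 1
        omega
      rw [htt]
      exact KEY P hPd
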